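/- arXiv:1107.1585 — 2 statements merged into one kernel-verified Lean document; each statement's English description precedes it below -/
import Mathlib

section
/- Let Φ be a 2-CNF formula in which every clause consists of exactly two (possibly equal) literal occurrences, let G_Φ be its occurrence graph, and let k ≥ 0 be an integer. Then there exists a set X of at most k clauses of Φ whose deletion makes Φ satisfiable if and only if G_Φ has a vertex cover of size at most μ(G_Φ) + k. -/
open Finset

/-- The occurrence graph `G_Φ` of a 2-CNF formula `Φ` in which every clause consists of
exactly two (possibly equal) literal occurrences.

The formula is encoded as follows: `Var` is the set of variables, `n x` is the number of
occurrences of the variable `x`, numbered by `Fin (n x)`; an occurrence is an element of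
`Σ x, Fin (n x)`; `sgn o = true` iff occurrence `o` is a positive literal; `C` is the set
of clauses and the bijection `e : C × Bool ≃ Σ x, Fin (n x)` assigns to each clause its
two literal occurrences (so each occurrence belongs to exactly one clause slot).

Vertices are pairs `(⟨x, i⟩, b)`, where `(⟨x, i⟩, true) = v(x, i)` and
`(⟨x, i⟩, false) = v(¬x, i)`. Edges: `v(x,i) — v(¬x,j)` for every variable `x` and all
`i, j` (a complete bipartite graph between `V(x)` and `V(¬x)`), plus one clause edge
joining the vertices `(o, sgn o)` of the two occurrences `o` of each clause. -/
def occGraph {Var C : Type*} (n : Var → ℕ) (sgn : (Σ x : Var, Fin (n x)) → Bool)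
    (e : C × Bool ≃ (Σ x : Var, Fin (n x))) :
    SimpleGraph ((Σ x : Var, Fin (n x)) × Bool) :=
  SimpleGraph.fromRel (fun a b =>
    (a.1.1 = b.1.1 ∧ a.2 ≠ b.2) ∨
    (∃ c : C, a = (e (c, false), sgn (e (c, false))) ∧ b = (e (c, true), sgn (e (c, true)))))

/-- The truth assignment `φ` satisfies the clause `c`: one of the two literal occurrences
of `c` is made true by `φ`. -/
def clauseSat {Var C : Type*} (n : Var → ℕ) (sgn : (Σ x : Var, Fin (n x)) → Bool)
    (e : C × Bool ≃ (Σ x : Var, Fin (n x))) (φ : Var → Bool) (c : C) : Prop :=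
  φ (e (c, false)).1 = sgn (e (c, false)) ∨ φ (e (c, true)).1 = sgn (e (c, true))

/-- `M` is a matching of `G`: a set of edges of `G` that are pairwise vertex-disjoint. -/
def IsMatching {V : Type*} (G : SimpleGraph V) (M : Finset (Sym2 V)) : Prop :=
  (∀ e ∈ M, e ∈ G.edgeSet) ∧
  ∀ e ∈ M, ∀ f ∈ M, e ≠ f → ∀ v : V, v ∈ e → v ∉ f

/-- `μ(G)`: the maximum cardinality of a matching of `G`. -/
noncomputable def matchingNumber {V : Type*} (G : SimpleGraph V) : ℕ :=
  sSup {n : ℕ | ∃ M : Finset (Sym2 V), IsMatching G M ∧ M.card = n}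

/-- `Y` is a vertex cover of `G`: every edge has an endpoint in `Y`. -/
def IsVertexCover {V : Type*} (G : SimpleGraph V) (Y : Finset V) : Prop :=
  ∀ u v : V, G.Adj u v → u ∈ Y ∨ v ∈ Y

instance {Var C : Type*} (n : Var → ℕ) (sgn : (Σ x : Var, Fin (n x)) → Bool)
    (e : C × Bool ≃ (Σ x : Var, Fin (n x))) (φ : Var → Bool) :
    DecidablePred (clauseSat n sgn e φ) := fun _ => by
  unfold clauseSat; infer_instance


section Aux

lemma edge_filter_card {V : Type*} [Fintype V] [DecidableEq V] (G : SimpleGraph V) :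
    ∀ s ∈ G.edgeSet, (Finset.univ.filter (· ∈ s)).card = 2 := by
  intro s
  induction s using Sym2.ind with
  | _ a b =>
    intro hs
    have hab : a ≠ b := G.ne_of_adj (G.mem_edgeSet.mp hs)
    have hset : (Finset.univ.filter (· ∈ s(a, b))) = {a, b} := by
      ext x; simp [Sym2.mem_iff]
    rw [hset, Finset.card_pair hab]

lemma two_mul_matching_card_le {V : Type*} [Fintype V] [DecidableEq V] (G : SimpleGraph V)
    (M : Finset (Sym2 V)) (hM : IsMatching G M) : 2 * M.card ≤ Fintype.card V := by
  classical
  have hdisj : ∀ s ∈ M, ∀ t ∈ M, s ≠ t →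
      Disjoint (Finset.univ.filter (· ∈ s)) (Finset.univ.filter (· ∈ t)) := by
    intro s hs t ht hst
    refine Finset.disjoint_left.2 ?_
    intro v hv hv'
    exact hM.2 s hs t ht hst v (by simpa using hv) (by simpa using hv')
  calc 2 * M.card = ∑ s ∈ M, (Finset.univ.filter (· ∈ s)).card := by
        rw [Finset.sum_congr rfl (fun s hs => edge_filter_card G s (hM.1 s hs))]
        simp [mul_comm]
    _ = (M.biUnion fun s => Finset.univ.filter (· ∈ s)).card :=
        (Finset.card_biUnion hdisj).symm
    _ ≤ Fintype.card V := Finset.card_le_univ _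

variable {Var C : Type*} [Fintype Var] [DecidableEq Var] [Fintype C] [DecidableEq C]
  {n : Var → ℕ} {sgn : (Σ x : Var, Fin (n x)) → Bool}
  {e : C × Bool ≃ (Σ x : Var, Fin (n x))}

lemma exists_max_matching :
    ∃ M : Finset (Sym2 ((Σ x : Var, Fin (n x)) × Bool)),
      IsMatching (occGraph n sgn e) M ∧ M.card = Fintype.card (Σ x : Var, Fin (n x)) := by
  classical
  refine ⟨Finset.univ.image
      (fun o : Σ x : Var, Fin (n x) => s((o, true), (o, false))), ⟨?_, ?_⟩, ?_⟩
  · intro s hs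
    simp only [Finset.mem_image, Finset.mem_univ, true_and] at hs
    obtain ⟨o, rfl⟩ := hs
    rw [SimpleGraph.mem_edgeSet, occGraph, SimpleGraph.fromRel_adj]
    exact ⟨by simp, Or.inl (Or.inl ⟨rfl, by simp⟩)⟩
  · intro s hs t ht hst v hv hvt
    simp only [Finset.mem_image, Finset.mem_univ, true_and] at hs ht
    obtain ⟨o, rfl⟩ := hs; obtain ⟨o', rfl⟩ := ht
    have ho : o ≠ o' := fun h => hst (by rw [h])
    rw [Sym2.mem_iff] at hv hvt
    rcases hv with rfl | rfl <;> rcases hvt with h | h <;>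
      · rw [Prod.ext_iff] at h
        exact ho h.1
  · rw [Finset.card_image_of_injective _ ?_, Finset.card_univ]
    intro o o' h
    rw [Sym2.eq_iff] at h
    rcases h with ⟨h1, _⟩ | ⟨h1, _⟩ <;>
      · rw [Prod.ext_iff] at h1
        first
        | exact h1.1
        | (exact absurd h1.2 (by simp))

lemma matchingNumber_occ :
    matchingNumber (occGraph n sgn e) = Fintype.card (Σ x : Var, Fin (n x)) := by
  classical
  obtain ⟨M, hM, hcard⟩ := exists_max_matching (n := n) (sgn := sgn) (e := e)
  have hub : ∀ m ∈ {m : ℕ | ∃ M' : Finset (Sym2 ((Σ x : Var, Fin (n x)) × Bool)),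
      IsMatching (occGraph n sgn e) M' ∧ M'.card = m},
      m ≤ Fintype.card (Σ x : Var, Fin (n x)) := by
    rintro m ⟨M', hM', rfl⟩
    have h1 := two_mul_matching_card_le _ M' hM'
    have hV : Fintype.card ((Σ x : Var, Fin (n x)) × Bool)
        = 2 * Fintype.card (Σ x : Var, Fin (n x)) := by
      simp [Fintype.card_prod, mul_comm]
    omega
  unfold matchingNumber
  exact le_antisymm (csSup_le ⟨_, M, hM, hcard⟩ hub)
    (le_csSup ⟨_, hub⟩ ⟨M, hM, hcard⟩)

lemma card_side (ψ : Var → Bool) :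
    (Finset.univ.filter
        fun v : (Σ x : Var, Fin (n x)) × Bool => v.2 = ψ v.1.1).card
      = Fintype.card (Σ x : Var, Fin (n x)) := by
  classical
  rw [← Finset.card_univ]
  apply Finset.card_bij (fun v _ => v.1)
  · intro v hv; exact Finset.mem_univ _
  · intro a ha b hb h
    simp only [Finset.mem_filter] at ha hb
    exact Prod.ext h (by rw [ha.2, hb.2, h])
  · intro o _; exact ⟨(o, ψ o.1), by simp, rfl⟩

end Aux

/-- `Φ` can be made satisfiable by deleting at most `k` clauses if and only if the
occurrence graph `G_Φ` has a vertex cover of size at most `μ(G_Φ) + k`. -/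
theorem almostSat_iff_vertexCover {Var C : Type*} [Fintype Var] [DecidableEq Var]
    [Fintype C] [DecidableEq C] (n : Var → ℕ) (sgn : (Σ x : Var, Fin (n x)) → Bool)
    (e : C × Bool ≃ (Σ x : Var, Fin (n x))) (k : ℕ) :
    (∃ X : Finset C, X.card ≤ k ∧
      ∃ φ : Var → Bool, ∀ c : C, c ∉ X → clauseSat n sgn e φ c) ↔
    (∃ Y : Finset ((Σ x : Var, Fin (n x)) × Bool),
      IsVertexCover (occGraph n sgn e) Y ∧
      Y.card ≤ matchingNumber (occGraph n sgn e) + k) := by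
  classical
  rw [matchingNumber_occ]
  constructor
  · rintro ⟨X, hXk, φ, hφ⟩
    refine ⟨(Finset.univ.filter
        fun v : (Σ x : Var, Fin (n x)) × Bool => v.2 = φ v.1.1)
        ∪ X.image (fun c => (e (c, false), sgn (e (c, false)))), ?_, ?_⟩
    · intro u v huv
      rw [occGraph, SimpleGraph.fromRel_adj] at huv
      obtain ⟨hne, h⟩ := huv
      have key : ∀ a b : (Σ x : Var, Fin (n x)) × Bool,
          ((a.1.1 = b.1.1 ∧ a.2 ≠ b.2) ∨
            (∃ c : C, a = (e (c, false), sgn (e (c, false))) ∧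
              b = (e (c, true), sgn (e (c, true))))) →
          a ∈ (Finset.univ.filter
              fun v : (Σ x : Var, Fin (n x)) × Bool => v.2 = φ v.1.1)
            ∪ X.image (fun c => (e (c, false), sgn (e (c, false)))) ∨
          b ∈ (Finset.univ.filter
              fun v : (Σ x : Var, Fin (n x)) × Bool => v.2 = φ v.1.1)
            ∪ X.image (fun c => (e (c, false), sgn (e (c, false)))) := by
        intro a b hab
        rcases hab with ⟨hx, hb⟩ | ⟨c, rfl, rfl⟩
        · by_cases h2 : a.2 = φ a.1.1
          · exact Or.inl (Finset.mem_union_left _ (by simp [h2]))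
          · refine Or.inr (Finset.mem_union_left _ ?_)
            simp only [Finset.mem_filter, Finset.mem_univ, true_and]
            rw [← hx]
            revert h2 hb
            cases a.2 <;> cases b.2 <;> cases φ a.1.1 <;> simp
        · by_cases hc : c ∈ X
          · exact Or.inl (Finset.mem_union_right _
              (Finset.mem_image.2 ⟨c, hc, rfl⟩))
          · rcases hφ c hc with hs | hs
            · exact Or.inl (Finset.mem_union_left _ (by simp [hs]))
            · exact Or.inr (Finset.mem_union_left _ (by simp [hs]))
      rcases h with h | h
      · exact key u v h
      · exact (key v u h).symm
    · calc _ ≤ (Finset.univ.filter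
            fun v : (Σ x : Var, Fin (n x)) × Bool => v.2 = φ v.1.1).card
            + (X.image (fun c => (e (c, false), sgn (e (c, false))))).card :=
          Finset.card_union_le _ _
        _ ≤ Fintype.card (Σ x : Var, Fin (n x)) + k := by
          rw [card_side]
          exact Nat.add_le_add_left
            (le_trans (Finset.card_image_le) hXk) _
  · rintro ⟨Y, hY, hYcard⟩
    set φ : Var → Bool := fun x =>
      decide (∀ i : Fin (n x), ((⟨x, i⟩ : Σ x : Var, Fin (n x)), true) ∈ Y)
      with hφdef
    have hS : ∀ o : Σ x : Var, Fin (n x), (o, φ o.1) ∈ Y := by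
      intro o
      by_cases hall : ∀ i : Fin (n o.1), ((⟨o.1, i⟩ : Σ x : Var, Fin (n x)), true) ∈ Y
      · have h1 : φ o.1 = true := by simp [hφdef, hall]
        rw [h1]
        have h2 := hall o.2
        have : (⟨o.1, o.2⟩ : Σ x : Var, Fin (n x)) = o := by
          cases o; rfl
        rwa [this] at h2
      · have hf : φ o.1 = false := by
          simp only [hφdef, decide_eq_false_iff_not]
          exact hall
        push_neg at hall
        obtain ⟨i, hi⟩ := hall
        rw [hf]
        have hadj : (occGraph n sgn e).Adj ((⟨o.1, i⟩ : Σ x : Var, Fin (n x)), true)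
            (o, false) := by
          rw [occGraph, SimpleGraph.fromRel_adj]
          exact ⟨by simp [Prod.ext_iff], Or.inl (Or.inl ⟨rfl, by simp⟩)⟩
        rcases hY _ _ hadj with h | h
        · exact absurd h hi
        · exact h
    set S := (Finset.univ.filter
        fun v : (Σ x : Var, Fin (n x)) × Bool => v.2 = φ v.1.1) with hSdef
    have hSsub : S ⊆ Y := by
      intro v hv
      simp only [hSdef, Finset.mem_filter, Finset.mem_univ, true_and] at hv
      have := hS v.1
      rwa [← hv] at this
    refine ⟨Finset.univ.filter (fun c => ¬ clauseSat n sgn e φ c), ?_, φ, ?_⟩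
    · set f : C → (Σ x : Var, Fin (n x)) × Bool := fun c =>
        if (e (c, false), sgn (e (c, false))) ∈ Y
        then (e (c, false), sgn (e (c, false)))
        else (e (c, true), sgn (e (c, true))) with hfdef
      have hmaps : ∀ c ∈ Finset.univ.filter (fun c => ¬ clauseSat n sgn e φ c),
          f c ∈ Y \ S := by
        intro c hc
        simp only [Finset.mem_filter, Finset.mem_univ, true_and, clauseSat,
          not_or] at hc
        have hadj : (occGraph n sgn e).Adj (e (c, false), sgn (e (c, false)))
            (e (c, true), sgn (e (c, true))) := by
          rw [occGraph, SimpleGraph.fromRel_adj]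
          refine ⟨?_, Or.inl (Or.inr ⟨c, rfl, rfl⟩)⟩
          intro h
          rw [Prod.ext_iff] at h
          have := e.injective (h.1 : e (c, false) = e (c, true))
          simp at this
        have hfY : f c ∈ Y := by
          rw [hfdef]
          by_cases h : (e (c, false), sgn (e (c, false))) ∈ Y
          · simpa [h] using h
          · rcases hY _ _ hadj with h' | h'
            · exact absurd h' h
            · simpa [h] using h'
        have hfnS : f c ∉ S := by
          rw [hfdef]
          by_cases h : (e (c, false), sgn (e (c, false))) ∈ Y <;>
            simp only [h, if_true, if_false, hSdef, Finset.mem_filter,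
              Finset.mem_univ, true_and] <;>
            [skip; skip] <;> intro heq
          · exact hc.1 heq.symm
          · exact hc.2 heq.symm
        exact Finset.mem_sdiff.2 ⟨hfY, hfnS⟩
      have hinj : ∀ c ∈ Finset.univ.filter (fun c => ¬ clauseSat n sgn e φ c),
          ∀ c' ∈ Finset.univ.filter (fun c => ¬ clauseSat n sgn e φ c),
          f c = f c' → c = c' := by
        intro c _ c' _ h
        rw [hfdef] at h
        have : ∃ b b' : Bool, e (c, b) = e (c', b') := by
          by_cases h1 : (e (c, false), sgn (e (c, false))) ∈ Y <;>
            by_cases h2 : (e (c', false), sgn (e (c', false))) ∈ Y <;>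
            simp only [h1, h2, if_true, if_false] at h <;>
            rw [Prod.ext_iff] at h
          · exact ⟨false, false, h.1⟩
          · exact ⟨false, true, h.1⟩
          · exact ⟨true, false, h.1⟩
          · exact ⟨true, true, h.1⟩
        obtain ⟨b, b', hbb⟩ := this
        have := e.injective hbb
        exact (Prod.ext_iff.1 this).1
      have hcard := Finset.card_le_card_of_injOn f hmaps
        (fun c hc c' hc' h => hinj c hc c' hc' h)
      have hsd : (Y \ S).card = Y.card - S.card := Finset.card_sdiff_of_subset hSsub
      have hScard : S.card = Fintype.card (Σ x : Var, Fin (n x)) := card_side φ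
      have hSle : S.card ≤ Y.card := Finset.card_le_card hSsub
      omega
    · intro c hc
      simp only [Finset.mem_filter, Finset.mem_univ, true_and, not_not] at hc
      exact hc
end

section
/- In the multicut instance I' = (G', 𝒯) constructed from a multicoloured graph (G, V₁, …, V_r) with |V_i| ≥ 2 for all i and |V| = n, every LP-feasible assignment for the multicut LP-relaxation has cost at least n. Consequently, the optimal cost of the multicut LP-relaxation of I' equals n. -/
open Finset

/-- The vertices of the multicut gadget graph `G'` built from a multicoloured graph on
vertex set `V` with `r` colour classes: the original vertices `orig v`, the primed
copies `prime v`, and the degree-one terminals `tv v`, `sv v` (attached to `v`),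
`sv' v` (attached to `v'`), and `av i`, `bv i` (attached to the endpoints of the path
`P i`). -/
inductive GVert (V : Type*) (r : ℕ) where
  | orig (v : V)
  | prime (v : V)
  | tv (v : V)
  | sv (v : V)
  | sv' (v : V)
  | av (i : Fin r)
  | bv (i : Fin r)
  deriving DecidableEq, Fintype

/-- The (asymmetric) base relation of the edges of the multicut gadget graph `G'`.
Here `P : V → Fin r` is the partition into classes `V i = P ⁻¹ {i}`, and for each `i`
the equivalence `ord i : Fin (m i) ≃ {v // P v = i}` fixes an arbitrary order of `V i`,
along which the primed copies of `V i` are connected into the path `P i`. -/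
def gadgetRel {V : Type*} (G : SimpleGraph V) {r : ℕ} (P : V → Fin r) (m : Fin r → ℕ)
    (ord : ∀ i, Fin (m i) ≃ {v : V // P v = i}) :
    GVert V r → GVert V r → Prop
  | .orig u, .orig v => G.Adj u v
  | .orig u, .prime v => u = v
  | .prime u, .prime v => ∃ (i : Fin r) (j : Fin (m i)) (hj : (j : ℕ) + 1 < m i),
      (ord i j : {v : V // P v = i}).1 = u ∧
      (ord i ⟨(j : ℕ) + 1, hj⟩ : {v : V // P v = i}).1 = v
  | .tv u, .orig v => u = v
  | .sv u, .orig v => u = v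
  | .sv' u, .prime v => u = v
  | .av i, .prime v => ∃ h : 0 < m i, (ord i ⟨0, h⟩ : {v : V // P v = i}).1 = v
  | .bv i, .prime v =>
      ∃ h : 0 < m i,
        (ord i ⟨m i - 1, Nat.sub_lt h Nat.one_pos⟩ : {v : V // P v = i}).1 = v
  | _, _ => False

/-- The multicut gadget graph `G'` (the symmetrisation of `gadgetRel`). -/
def gadgetGraph {V : Type*} (G : SimpleGraph V) {r : ℕ} (P : V → Fin r) (m : Fin r → ℕ)
    (ord : ∀ i, Fin (m i) ≃ {v : V // P v = i}) : SimpleGraph (GVert V r) :=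
  SimpleGraph.fromRel (gadgetRel G P m ord)

/-- The set `𝒯` of demand pairs of the multicut instance: all pairs `(t_u, t_v)` for
`u ≠ v`, the pairs `(s_v, s'_v)`, and the pairs `(a_i, b_i)`. -/
def demandPairs (V : Type*) (r : ℕ) : Set (GVert V r × GVert V r) :=
  {p | (∃ u v : V, u ≠ v ∧ p = (.tv u, .tv v)) ∨
       (∃ v : V, p = (.sv v, .sv' v)) ∨
       (∃ i : Fin r, p = (.av i, .bv i))}

/-- The non-terminal vertices of `G'` are the original and the primed vertices. -/
def nonTerminal {V : Type*} {r : ℕ} : GVert V r → Bool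
  | .orig _ => true
  | .prime _ => true
  | _ => false

/-- `Y` is a multicut for `(G', 𝒯)`: `Y` consists of non-terminal vertices and every
path in `G'` between the two vertices of a demand pair contains a vertex of `Y`
(equivalently, removing `Y` disconnects every demand pair). -/
def IsMulticut {V : Type*} {r : ℕ} (H : SimpleGraph (GVert V r))
    (D : Set (GVert V r × GVert V r)) (Y : Finset (GVert V r)) : Prop :=
  (∀ y ∈ Y, nonTerminal y = true) ∧
  ∀ ⦃s t : GVert V r⦄, (s, t) ∈ D →
    ∀ p : H.Walk s t, p.IsPath → ∃ v ∈ p.support, v ∈ Y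

/-- `d` is an LP-feasible assignment for the multicut LP-relaxation of `(G', 𝒯)`:
`d` is nonnegative on non-terminal vertices and for every demand pair and every path
between its two vertices, the sum of `d` over the non-terminal vertices of the path is
at least `1`. -/
def LPFeasibleMulticut {V : Type*} [DecidableEq V] {r : ℕ} (H : SimpleGraph (GVert V r))
    (D : Set (GVert V r × GVert V r)) (d : GVert V r → ℝ) : Prop :=
  (∀ v, nonTerminal v = true → 0 ≤ d v) ∧
  ∀ ⦃s t : GVert V r⦄, (s, t) ∈ D → ∀ p : H.Walk s t, p.IsPath →
    1 ≤ ∑ v ∈ p.support.toFinset.filter (fun v => nonTerminal v = true), d v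

/-- The cost of a multicut LP assignment: the sum of `d` over all non-terminal
vertices. -/
def multicutLPCost {V : Type*} [Fintype V] [DecidableEq V] {r : ℕ}
    (d : GVert V r → ℝ) : ℝ :=
  ∑ v ∈ univ.filter (fun v : GVert V r => nonTerminal v = true), d v

section Helpers

open Finset SimpleGraph

variable {V : Type*} {r : ℕ}

lemma sum_ge_one_of_two {α : Type*} [DecidableEq α] {s : Finset α} {f : α → ℝ} {x y : α}
    (hx : x ∈ s) (hy : y ∈ s) (hxy : x ≠ y) (hf : ∀ a ∈ s, 0 ≤ f a)
    (hfx : (1:ℝ)/2 ≤ f x) (hfy : (1:ℝ)/2 ≤ f y) : 1 ≤ ∑ a ∈ s, f a := by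
  have hsub : ({x, y} : Finset α) ⊆ s := by
    intro a ha
    simp only [Finset.mem_insert, Finset.mem_singleton] at ha
    rcases ha with rfl | rfl <;> assumption
  calc (1:ℝ) = 1/2 + 1/2 := by norm_num
    _ ≤ f x + f y := add_le_add hfx hfy
    _ = ∑ a ∈ ({x,y} : Finset α), f a := (Finset.sum_pair hxy).symm
    _ ≤ ∑ a ∈ s, f a := Finset.sum_le_sum_of_subset_of_nonneg hsub (fun a ha _ => hf a ha)

lemma start_nbr_mem_support {α : Type*} {H : SimpleGraph α} {s t : α} (p : H.Walk s t)
    (hst : s ≠ t) {w : α} (hw : ∀ x, H.Adj s x → x = w) : w ∈ p.support := by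
  cases p with
  | nil => exact absurd rfl hst
  | cons h q =>
    obtain rfl := hw _ h
    exact List.mem_cons_of_mem _ q.start_mem_support

lemma end_nbr_mem_support {α : Type*} {H : SimpleGraph α} {s t : α} (p : H.Walk s t)
    (hst : s ≠ t) {w : α} (hw : ∀ x, H.Adj t x → x = w) : w ∈ p.support := by
  have := start_nbr_mem_support p.reverse (Ne.symm hst) hw
  rwa [SimpleGraph.Walk.support_reverse, List.mem_reverse] at this

variable (G : SimpleGraph V) (P : V → Fin r) (m : Fin r → ℕ)
    (ord : ∀ i, Fin (m i) ≃ {v : V // P v = i})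

lemma adj_tv {u : V} {x : GVert V r} (h : (gadgetGraph G P m ord).Adj (.tv u) x) :
    x = .orig u := by
  rw [gadgetGraph, SimpleGraph.fromRel_adj] at h
  obtain ⟨-, h | h⟩ := h <;> cases x <;> simp_all [gadgetRel]

lemma adj_sv {u : V} {x : GVert V r} (h : (gadgetGraph G P m ord).Adj (.sv u) x) :
    x = .orig u := by
  rw [gadgetGraph, SimpleGraph.fromRel_adj] at h
  obtain ⟨-, h | h⟩ := h <;> cases x <;> simp_all [gadgetRel]

lemma adj_sv' {u : V} {x : GVert V r} (h : (gadgetGraph G P m ord).Adj (.sv' u) x) :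
    x = .prime u := by
  rw [gadgetGraph, SimpleGraph.fromRel_adj] at h
  obtain ⟨-, h | h⟩ := h <;> cases x <;> simp_all [gadgetRel]

lemma adj_av {i : Fin r} (h0 : 0 < m i) {x : GVert V r}
    (h : (gadgetGraph G P m ord).Adj (.av i) x) :
    x = .prime (ord i ⟨0, h0⟩ : {v : V // P v = i}).1 := by
  rw [gadgetGraph, SimpleGraph.fromRel_adj] at h
  obtain ⟨-, h | h⟩ := h <;> cases x <;> simp_all [gadgetRel]

lemma adj_bv {i : Fin r} (h0 : 0 < m i) {x : GVert V r}
    (h : (gadgetGraph G P m ord).Adj (.bv i) x) :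
    x = .prime (ord i ⟨m i - 1, Nat.sub_lt h0 Nat.one_pos⟩ : {v : V // P v = i}).1 := by
  rw [gadgetGraph, SimpleGraph.fromRel_adj] at h
  obtain ⟨-, h | h⟩ := h <;> cases x <;> simp_all [gadgetRel]

end Helpers
section Helpers2
open Finset SimpleGraph
variable {V : Type*} {r : ℕ}
variable (G : SimpleGraph V) (P : V → Fin r) (m : Fin r → ℕ)
    (ord : ∀ i, Fin (m i) ≃ {v : V // P v = i})

lemma adj_sv_orig (v : V) : (gadgetGraph G P m ord).Adj (.sv v) (.orig v) := by
  rw [gadgetGraph, SimpleGraph.fromRel_adj]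
  exact ⟨by simp, Or.inl rfl⟩

lemma adj_orig_prime (v : V) : (gadgetGraph G P m ord).Adj (.orig v) (.prime v) := by
  rw [gadgetGraph, SimpleGraph.fromRel_adj]
  exact ⟨by simp, Or.inl rfl⟩

lemma adj_prime_sv' (v : V) : (gadgetGraph G P m ord).Adj (.prime v) (.sv' v) := by
  rw [gadgetGraph, SimpleGraph.fromRel_adj]
  exact ⟨by simp, Or.inr rfl⟩

def svPath (v : V) : (gadgetGraph G P m ord).Walk (.sv v) (.sv' v) :=
  .cons (adj_sv_orig G P m ord v)
    (.cons (adj_orig_prime G P m ord v)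
      (.cons (adj_prime_sv' G P m ord v) .nil))

lemma svPath_support (v : V) :
    (svPath G P m ord v).support = [.sv v, .orig v, .prime v, .sv' v] := rfl

lemma svPath_isPath (v : V) : (svPath G P m ord v).IsPath := by
  rw [SimpleGraph.Walk.isPath_def, svPath_support]
  simp

lemma svPath_filter_sum [DecidableEq V] (v : V) (d : GVert V r → ℝ) :
    ∑ x ∈ (svPath G P m ord v).support.toFinset.filter
        (fun x => nonTerminal x = true), d x = d (.orig v) + d (.prime v) := by
  have : (svPath G P m ord v).support.toFinset.filter (fun x => nonTerminal x = true)
      = {GVert.orig v, GVert.prime v} := by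
    rw [svPath_support]
    ext x
    cases x <;> simp [nonTerminal]
  rw [this, Finset.sum_pair (by simp)]

def ntEmb (V : Type*) (r : ℕ) : V ⊕ V ↪ GVert V r :=
  ⟨fun x => Sum.elim GVert.orig GVert.prime x, by
    rintro (a|a) (b|b) h <;> simp_all⟩

lemma cost_eq [Fintype V] [DecidableEq V] (d : GVert V r → ℝ) :
    multicutLPCost d = ∑ v : V, d (.orig v) + ∑ v : V, d (.prime v) := by
  have hfil : (univ.filter fun v : GVert V r => nonTerminal v = true)
      = univ.map (ntEmb V r) := by
    ext x
    rw [Finset.mem_filter]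
    cases x <;> simp [ntEmb, nonTerminal, Sum.exists, DFunLike.coe]
  rw [multicutLPCost, hfil, Finset.sum_map, Fintype.sum_sum_type]
  rfl

end Helpers2
section Main
open Finset SimpleGraph
variable {V : Type*} {r : ℕ}
variable (G : SimpleGraph V) (P : V → Fin r) (m : Fin r → ℕ)
    (ord : ∀ i, Fin (m i) ≃ {v : V // P v = i})

lemma lower_bound [Fintype V] [DecidableEq V] (d : GVert V r → ℝ)
    (hd : LPFeasibleMulticut (gadgetGraph G P m ord) (demandPairs V r) d) :
    (Fintype.card V : ℝ) ≤ multicutLPCost d := by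
  obtain ⟨h0, h1⟩ := hd
  have key : ∀ v : V, 1 ≤ d (.orig v) + d (.prime v) := by
    intro v
    have hD : ((GVert.sv v : GVert V r), (GVert.sv' v : GVert V r)) ∈ demandPairs V r :=
      Or.inr (Or.inl ⟨v, rfl⟩)
    have := h1 hD (svPath G P m ord v) (svPath_isPath G P m ord v)
    rwa [svPath_filter_sum] at this
  calc (Fintype.card V : ℝ) = ∑ _v : V, (1:ℝ) := by simp
    _ ≤ ∑ v : V, (d (.orig v) + d (.prime v)) := Finset.sum_le_sum fun v _ => key v
    _ = multicutLPCost d := by rw [cost_eq, Finset.sum_add_distrib]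

lemma witness_feasible [DecidableEq V] (hm : ∀ i, 2 ≤ m i) :
    LPFeasibleMulticut (gadgetGraph G P m ord) (demandPairs V r)
      (fun x => if nonTerminal x = true then (1:ℝ)/2 else 0) := by
  set d : GVert V r → ℝ := fun x => if nonTerminal x = true then (1:ℝ)/2 else 0 with hdval
  constructor
  · intro v hv; simp [hdval, hv]
  · rintro s t (⟨u, v, huv, hp⟩ | ⟨v, hp⟩ | ⟨i, hp⟩) p hpath <;>
      rw [Prod.ext_iff] at hp <;> obtain ⟨rfl, rfl⟩ := hp
    · -- pair (tv u, tv v)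
      have hst : (GVert.tv u : GVert V r) ≠ .tv v := by simpa using huv
      have hx := start_nbr_mem_support p hst (fun x h => adj_tv G P m ord h)
      have hy := end_nbr_mem_support p hst (fun x h => adj_tv G P m ord h)
      refine sum_ge_one_of_two (x := GVert.orig u) (y := GVert.orig v) ?_ ?_ (by simpa) ?_ ?_ ?_
      · exact Finset.mem_filter.mpr ⟨List.mem_toFinset.mpr hx, rfl⟩
      · exact Finset.mem_filter.mpr ⟨List.mem_toFinset.mpr hy, rfl⟩
      · intro a ha; positivity
      · simp [hdval, nonTerminal]
      · simp [hdval, nonTerminal]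
    · -- pair (sv v, sv' v)
      have hst : (GVert.sv v : GVert V r) ≠ .sv' v := by simp
      have hx := start_nbr_mem_support p hst (fun x h => adj_sv G P m ord h)
      have hy := end_nbr_mem_support p hst (fun x h => adj_sv' G P m ord h)
      refine sum_ge_one_of_two (x := GVert.orig v) (y := GVert.prime v) ?_ ?_ (by simp) ?_ ?_ ?_
      · exact Finset.mem_filter.mpr ⟨List.mem_toFinset.mpr hx, rfl⟩
      · exact Finset.mem_filter.mpr ⟨List.mem_toFinset.mpr hy, rfl⟩
      · intro a ha; positivity
      · simp [hdval, nonTerminal]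
      · simp [hdval, nonTerminal]
    · -- pair (av i, bv i)
      have h0 : 0 < m i := lt_of_lt_of_le Nat.zero_lt_two (hm i)
      have hst : (GVert.av i : GVert V r) ≠ .bv i := by simp
      have hx := start_nbr_mem_support p hst (fun x h => adj_av G P m ord h0 h)
      have hy := end_nbr_mem_support p hst (fun x h => adj_bv G P m ord h0 h)
      have hne : (GVert.prime (ord i ⟨0, h0⟩ : {v : V // P v = i}).1 : GVert V r)
          ≠ .prime (ord i ⟨m i - 1, Nat.sub_lt h0 Nat.one_pos⟩ : {v : V // P v = i}).1 := by
        intro h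
        have h2 : (ord i ⟨0, h0⟩ : {v : V // P v = i})
            = ord i ⟨m i - 1, Nat.sub_lt h0 Nat.one_pos⟩ := by
          apply Subtype.ext
          simpa using h
        have := (ord i).injective h2
        have h3 : (0 : ℕ) = m i - 1 := congrArg Fin.val this
        have := hm i
        omega
      refine sum_ge_one_of_two ?_ ?_ hne ?_ ?_ ?_
      · exact Finset.mem_filter.mpr ⟨List.mem_toFinset.mpr hx, rfl⟩
      · exact Finset.mem_filter.mpr ⟨List.mem_toFinset.mpr hy, rfl⟩
      · intro a ha; positivity
      · simp [hdval, nonTerminal]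
      · simp [hdval, nonTerminal]

end Main

/-- In the multicut instance `(G', 𝒯)` built from a multicoloured graph
`(G, V₁, …, V_r)` with `|V_i| ≥ 2` and `|V| = n`, every LP-feasible assignment for the
multicut LP-relaxation has cost at least `n`; consequently the optimal cost of the
multicut LP-relaxation equals `n`. -/
theorem multicut_lp_optimum {V : Type*} [Fintype V] [DecidableEq V]
    (G : SimpleGraph V) {r : ℕ} (P : V → Fin r) (m : Fin r → ℕ)
    (ord : ∀ i, Fin (m i) ≃ {v : V // P v = i})
    (hclique : ∀ u v : V, u ≠ v → P u = P v → G.Adj u v)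
    (hm : ∀ i, 2 ≤ m i) :
    (∀ d : GVert V r → ℝ,
      LPFeasibleMulticut (gadgetGraph G P m ord) (demandPairs V r) d →
        (Fintype.card V : ℝ) ≤ multicutLPCost d) ∧
    IsLeast {c : ℝ | ∃ d : GVert V r → ℝ,
        LPFeasibleMulticut (gadgetGraph G P m ord) (demandPairs V r) d ∧
        multicutLPCost d = c}
      (Fintype.card V) := by
  refine ⟨fun d hd => lower_bound G P m ord d hd, ⟨?_, ?_⟩⟩
  · refine ⟨fun x => if nonTerminal x = true then (1:ℝ)/2 else 0,
      witness_feasible G P m ord hm, ?_⟩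
    rw [cost_eq]
    simp [nonTerminal]
    ring
  · rintro c ⟨d, hd, rfl⟩
    exact lower_bound G P m ord d hd
end
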